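/- Let c and n be integers with n>2c−1 and let B be a nonlinear betweenness structure of order n and co-size n−c on ground set X such that every point x∈X satisfies d_B(x)=n−c or d_B(x)≤1. Then the triangle hypergraph H(B) is a tight star. -/

import Mathlib

open scoped ENNReal

namespace FMS

/-- An (ordered) triple is collinear if one of its points lies between the other two. -/
def CollinearTriple {X : Type*} (btw : X → X → X → Prop) (x y z : X) : Prop :=
  btw x y z ∨ btw y x z ∨ btw x z y

/-- A finite set of points is collinear if it can be enumerated as a collinear triple. -/
def CollinearSet {X : Type*} (btw : X → X → X → Prop) (T : Finset X) : Prop :=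
  ∃ x y z : X, (T : Set X) = {x, y, z} ∧ CollinearTriple btw x y z

/-- A triangle is a 3-element subset of the ground set that is not collinear. -/
def IsTriangle {X : Type*} (btw : X → X → X → Prop) (T : Finset X) : Prop :=
  T.card = 3 ∧ ¬ CollinearSet btw T

/-- The co-size of a betweenness structure: the number of triangles. -/
noncomputable def coSize {X : Type*} (btw : X → X → X → Prop) : ℕ :=
  Set.ncard {T : Finset X | IsTriangle btw T}

/-- The degree of a point: the number of triangles containing it. -/
noncomputable def degB {X : Type*} (btw : X → X → X → Prop) (x : X) : ℕ :=
  Set.ncard {T : Finset X | IsTriangle btw T ∧ x ∈ T}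

/-- A betweenness structure is linear if every 3-element subset is collinear. -/
def Linear {X : Type*} (btw : X → X → X → Prop) : Prop :=
  ∀ T : Finset X, T.card = 3 → CollinearSet btw T

/-- The axioms (P1)-(P4) of (almost-metrizable) betweenness structures. -/
def IsBtw {X : Type*} (btw : X → X → X → Prop) : Prop :=
  (∀ x z : X, btw x x z) ∧
  (∀ x y z : X, btw x y z → btw z y x) ∧
  (∀ x y z : X, btw x y z → btw y x z → x = y) ∧
  (∀ x y z w : X, btw x y z → btw x w y → btw x w z ∧ btw w y z)

/-- Isomorphism of betweenness structures. -/
def BIso {X Y : Type*} (btwX : X → X → X → Prop) (btwY : Y → Y → Y → Prop) : Prop :=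
  ∃ e : X ≃ Y, ∀ x y z : X, btwX x y z ↔ btwY (e x) (e y) (e z)

/-- The cost (length) of a walk, given edge weights `w` (non-edges have weight `⊤`). -/
noncomputable def walkCost {X : Type*} (w : X → X → ℝ≥0∞) : List X → ℝ≥0∞
  | [] => 0
  | [_] => 0
  | a :: b :: l => w a b + walkCost w (b :: l)

/-- Shortest-path distance for the weighted graph with weight function `w`. -/
noncomputable def spDist {X : Type*} (w : X → X → ℝ≥0∞) (x y : X) : ℝ≥0∞ :=
  ⨅ l ∈ {l : List X | l.head? = some x ∧ l.getLast? = some y}, walkCost w l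

/-- The betweenness structure induced by the weighted graph with weight function `w`:
`y` is between `x` and `z` iff `d(x,y) + d(y,z) = d(x,z)` for the shortest-path metric. -/
def metricBtw {X : Type*} (w : X → X → ℝ≥0∞) (x y z : X) : Prop :=
  spDist w x y + spDist w y z = spDist w x z

/-- The ordered betweenness structure `𝒫ₙ` induced by the path `Pₙ`. -/
def pathBtw (n : ℕ) : Fin n → Fin n → Fin n → Prop := fun i j k =>
  (i ≤ j ∧ j ≤ k) ∨ (k ≤ j ∧ j ≤ i)

/-- Unit edge weights of the 4-cycle `C₄`. -/
noncomputable def wC4 : Fin 4 → Fin 4 → ℝ≥0∞ := fun i j =>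
  if (j : ℕ) = ((i : ℕ) + 1) % 4 ∨ (i : ℕ) = ((j : ℕ) + 1) % 4 then 1 else ⊤

/-- Unit edge weights of the complete graph `K₃`. -/
noncomputable def wK3 : Fin 3 → Fin 3 → ℝ≥0∞ := fun i j => if i ≠ j then 1 else ⊤

/-- A betweenness structure is regular if no 4-element subset induces a substructure
isomorphic to `𝒞₄` (no cyclic line). -/
def Regular {X : Type*} (btw : X → X → X → Prop) : Prop :=
  ∀ Y : Set X, ¬ BIso (fun a b c : Y => btw a.1 b.1 c.1) (metricBtw wC4)

/-- A betweenness structure is orderable if it has an ordered extension: there is an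
ordering (injective labeling by naturals) of the points such that every betweenness
relation is compatible with it. -/
def Orderable {X : Type*} (btw : X → X → X → Prop) : Prop :=
  ∃ f : X → ℕ, Function.Injective f ∧
    ∀ x y z : X, btw x y z → (f x ≤ f y ∧ f y ≤ f z) ∨ (f z ≤ f y ∧ f y ≤ f x)

/-- The triangle hypergraph is a Δ-star: at most one edge, or all pairs of distinct
triangles meet in the same kernel `K`. -/
def DeltaStar {X : Type*} (btw : X → X → X → Prop) : Prop :=
  {T : Finset X | IsTriangle btw T}.Subsingleton ∨
  ∃ K : Set X, ∀ E F : Finset X, IsTriangle btw E → IsTriangle btw F → E ≠ F →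
    (E : Set X) ∩ (F : Set X) = K

/-- The triangle hypergraph is a tight star: at most one edge, or all pairs of distinct
triangles meet in the same 2-element kernel `K`. -/
def TightStar {X : Type*} (btw : X → X → X → Prop) : Prop :=
  {T : Finset X | IsTriangle btw T}.Subsingleton ∨
  ∃ K : Set X, K.ncard = 2 ∧ ∀ E F : Finset X, IsTriangle btw E → IsTriangle btw F → E ≠ F →
    (E : Set X) ∩ (F : Set X) = K

/-- A class of betweenness structures is hereditary if it is closed under isomorphism
and under taking induced substructures. -/
def Hereditary (Φ : ∀ X : Type, (X → X → X → Prop) → Prop) : Prop :=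
  (∀ (X Y : Type) (bX : X → X → X → Prop) (bY : Y → Y → Y → Prop),
      BIso bX bY → Φ X bX → Φ Y bY) ∧
  (∀ (X : Type) (bX : X → X → X → Prop) (Y : Set X), Y.Nonempty →
      Φ X bX → Φ Y (fun a b c : Y => bX a.1 b.1 c.1))

/-! Weight functions of the graphs `Q`, `R`, `S`, `T`.
In each of the following, the vertex `Sum.inl a : Fin m ⊕ Bool` is the point
`x_{a+1}` (so `x₁,…,x_m` with `m = n - 2` are `Sum.inl 0, …, Sum.inl (m-1)`),
`Sum.inr false` is `y` and `Sum.inr true` is `z`. The parameter `i` is 1-based,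
as in the paper. Non-edges have weight `⊤`. -/

/-- `Q²ₙ` with `m = n - 2`: path plus edges `{y,x₁}, {z,x₁}, {y,z}`. -/
noncomputable def wQ2 (m : ℕ) : Fin m ⊕ Bool → Fin m ⊕ Bool → ℝ≥0∞
  | Sum.inl a, Sum.inl b => if (a : ℕ) + 1 = (b : ℕ) ∨ (b : ℕ) + 1 = (a : ℕ) then 1 else ⊤
  | Sum.inl a, Sum.inr _ => if (a : ℕ) = 0 then 1 else ⊤
  | Sum.inr _, Sum.inl b => if (b : ℕ) = 0 then 1 else ⊤
  | Sum.inr c, Sum.inr d => if c ≠ d then 1 else ⊤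

/-- `Q³ₙ` with `m = n - 2`: path plus edges `{y,x₁}, {z,x₁}`. -/
noncomputable def wQ3 (m : ℕ) : Fin m ⊕ Bool → Fin m ⊕ Bool → ℝ≥0∞
  | Sum.inl a, Sum.inl b => if (a : ℕ) + 1 = (b : ℕ) ∨ (b : ℕ) + 1 = (a : ℕ) then 1 else ⊤
  | Sum.inl a, Sum.inr _ => if (a : ℕ) = 0 then 1 else ⊤
  | Sum.inr _, Sum.inl b => if (b : ℕ) = 0 then 1 else ⊤
  | Sum.inr _, Sum.inr _ => ⊤

/-- `R²ₙ,ᵢ` with `m = n - 2`: path with edge `{xᵢ, xᵢ₊₁}` deleted, plus unit edges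
`{y,xᵢ}, {z,xᵢ}, {y,xᵢ₊₁}, {z,xᵢ₊₁}, {y,z}`. -/
noncomputable def wR2 (m i : ℕ) : Fin m ⊕ Bool → Fin m ⊕ Bool → ℝ≥0∞
  | Sum.inl a, Sum.inl b =>
      if ((a : ℕ) + 1 = (b : ℕ) ∧ (a : ℕ) + 1 ≠ i) ∨
         ((b : ℕ) + 1 = (a : ℕ) ∧ (b : ℕ) + 1 ≠ i) then 1 else ⊤
  | Sum.inl a, Sum.inr _ => if (a : ℕ) + 1 = i ∨ (a : ℕ) = i then 1 else ⊤
  | Sum.inr _, Sum.inl b => if (b : ℕ) + 1 = i ∨ (b : ℕ) = i then 1 else ⊤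
  | Sum.inr c, Sum.inr d => if c ≠ d then 1 else ⊤

/-- `R³ₙ,ᵢ` with `m = n - 2`: path with edge `{xᵢ, xᵢ₊₁}` deleted, plus unit edges
`{y,xᵢ}, {z,xᵢ}` and weight-2 edges `{y,xᵢ₊₁}, {z,xᵢ₊₁}`. -/
noncomputable def wR3 (m i : ℕ) : Fin m ⊕ Bool → Fin m ⊕ Bool → ℝ≥0∞
  | Sum.inl a, Sum.inl b =>
      if ((a : ℕ) + 1 = (b : ℕ) ∧ (a : ℕ) + 1 ≠ i) ∨
         ((b : ℕ) + 1 = (a : ℕ) ∧ (b : ℕ) + 1 ≠ i) then 1 else ⊤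
  | Sum.inl a, Sum.inr _ => if (a : ℕ) + 1 = i then 1 else if (a : ℕ) = i then 2 else ⊤
  | Sum.inr _, Sum.inl b => if (b : ℕ) + 1 = i then 1 else if (b : ℕ) = i then 2 else ⊤
  | Sum.inr _, Sum.inr _ => ⊤

/-- `R⁴ₙ,ᵢ` with `m = n - 2`: path with edge `{xᵢ, xᵢ₊₁}` deleted, plus unit edges
`{y,xᵢ}, {z,xᵢ}, {y,xᵢ₊₁}, {z,xᵢ₊₁}`. -/
noncomputable def wR4 (m i : ℕ) : Fin m ⊕ Bool → Fin m ⊕ Bool → ℝ≥0∞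
  | Sum.inl a, Sum.inl b =>
      if ((a : ℕ) + 1 = (b : ℕ) ∧ (a : ℕ) + 1 ≠ i) ∨
         ((b : ℕ) + 1 = (a : ℕ) ∧ (b : ℕ) + 1 ≠ i) then 1 else ⊤
  | Sum.inl a, Sum.inr _ => if (a : ℕ) + 1 = i ∨ (a : ℕ) = i then 1 else ⊤
  | Sum.inr _, Sum.inl b => if (b : ℕ) + 1 = i ∨ (b : ℕ) = i then 1 else ⊤
  | Sum.inr _, Sum.inr _ => ⊤

/-- `S²ₙ` with `m = n - 2`: path plus unit edges `{x₁,y}, {x_m,z}` and an edge `{y,z}`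
of weight `n - 2 = m`. -/
noncomputable def wS2 (m : ℕ) : Fin m ⊕ Bool → Fin m ⊕ Bool → ℝ≥0∞
  | Sum.inl a, Sum.inl b => if (a : ℕ) + 1 = (b : ℕ) ∨ (b : ℕ) + 1 = (a : ℕ) then 1 else ⊤
  | Sum.inl a, Sum.inr c =>
      if (c = false ∧ (a : ℕ) = 0) ∨ (c = true ∧ (a : ℕ) = m - 1) then 1 else ⊤
  | Sum.inr c, Sum.inl b =>
      if (c = false ∧ (b : ℕ) = 0) ∨ (c = true ∧ (b : ℕ) = m - 1) then 1 else ⊤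
  | Sum.inr c, Sum.inr d => if c ≠ d then (m : ℝ≥0∞) else ⊤

/-- `S³ₙ` with `m = n - 2`: path plus a unit edge `{x₁,y}`, a weight-2 edge `{x_m,z}`
and an edge `{y,z}` of weight `n - 2 = m`. -/
noncomputable def wS3 (m : ℕ) : Fin m ⊕ Bool → Fin m ⊕ Bool → ℝ≥0∞
  | Sum.inl a, Sum.inl b => if (a : ℕ) + 1 = (b : ℕ) ∨ (b : ℕ) + 1 = (a : ℕ) then 1 else ⊤
  | Sum.inl a, Sum.inr c =>
      if c = false ∧ (a : ℕ) = 0 then 1 else if c = true ∧ (a : ℕ) = m - 1 then 2 else ⊤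
  | Sum.inr c, Sum.inl b =>
      if c = false ∧ (b : ℕ) = 0 then 1 else if c = true ∧ (b : ℕ) = m - 1 then 2 else ⊤
  | Sum.inr c, Sum.inr d => if c ≠ d then (m : ℝ≥0∞) else ⊤

/-- `S⁴ₙ` with `m = n - 2`: path plus unit edges `{x₁,y}, {x_m,z}` and an edge `{y,z}`
of weight `n - 3 = m - 1`. -/
noncomputable def wS4 (m : ℕ) : Fin m ⊕ Bool → Fin m ⊕ Bool → ℝ≥0∞
  | Sum.inl a, Sum.inl b => if (a : ℕ) + 1 = (b : ℕ) ∨ (b : ℕ) + 1 = (a : ℕ) then 1 else ⊤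
  | Sum.inl a, Sum.inr c =>
      if (c = false ∧ (a : ℕ) = 0) ∨ (c = true ∧ (a : ℕ) = m - 1) then 1 else ⊤
  | Sum.inr c, Sum.inl b =>
      if (c = false ∧ (b : ℕ) = 0) ∨ (c = true ∧ (b : ℕ) = m - 1) then 1 else ⊤
  | Sum.inr c, Sum.inr d => if c ≠ d then ((m - 1 : ℕ) : ℝ≥0∞) else ⊤

/-- `Tₙ,ᵢ` with `m = n - 4`; the vertices `Sum.inl a` are the points `x_{a+1}`, and
`Sum.inr 0, Sum.inr 1, Sum.inr 2, Sum.inr 3` are `y, z, u, v` respectively. All edges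
have unit weight: the path edges `{x_j, x_{j+1}}` (`1 ≤ j ≤ n-5`, `j ≠ i`) together with
`{xᵢ,y}, {xᵢ,z}, {y,u}, {y,v}, {z,u}, {z,v}, {u,xᵢ₊₁}, {v,xᵢ₊₁}`. -/
noncomputable def wT (m i : ℕ) : Fin m ⊕ Fin 4 → Fin m ⊕ Fin 4 → ℝ≥0∞
  | Sum.inl a, Sum.inl b =>
      if ((a : ℕ) + 1 = (b : ℕ) ∧ (a : ℕ) + 1 ≠ i) ∨
         ((b : ℕ) + 1 = (a : ℕ) ∧ (b : ℕ) + 1 ≠ i) then 1 else ⊤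
  | Sum.inl a, Sum.inr c =>
      if ((a : ℕ) + 1 = i ∧ (c : ℕ) ≤ 1) ∨ ((a : ℕ) = i ∧ 2 ≤ (c : ℕ)) then 1 else ⊤
  | Sum.inr c, Sum.inl b =>
      if ((b : ℕ) + 1 = i ∧ (c : ℕ) ≤ 1) ∨ ((b : ℕ) = i ∧ 2 ≤ (c : ℕ)) then 1 else ⊤
  | Sum.inr c, Sum.inr d =>
      if ((c : ℕ) ≤ 1 ∧ 2 ≤ (d : ℕ)) ∨ ((d : ℕ) ≤ 1 ∧ 2 ≤ (c : ℕ)) then 1 else ⊤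


/-- if `n > 2c - 1` and `B` is a nonlinear betweenness structure of order
`n` and co-size `n - c` in which every point has degree `n - c` or at most `1`, then the
triangle hypergraph of `B` is a tight star. -/
theorem stmt15 {X : Type} [Fintype X] {n : ℕ} {c : ℤ}
    (hcard : Fintype.card X = n) (hnc : 2 * c - 1 < (n : ℤ))
    (btw : X → X → X → Prop) (hB : IsBtw btw) (hnl : ¬ Linear btw)
    (hcs : (coSize btw : ℤ) = (n : ℤ) - c)
    (hdeg : ∀ x : X, (degB btw x : ℤ) = (n : ℤ) - c ∨ degB btw x ≤ 1) :
    TightStar btw := by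
  classical
  set tr : Finset (Finset X) := Finset.univ.filter (fun T => IsTriangle btw T) with htr
  have htrset : {T : Finset X | IsTriangle btw T} = ↑tr := by
    ext T; simp [htr]
  have hcoSize : coSize btw = tr.card := by
    rw [coSize, htrset, Set.ncard_coe_finset]
  set t := tr.card with htdef
  have hdegF : ∀ x : X, degB btw x = (tr.filter (fun T => x ∈ T)).card := by
    intro x
    have h : {T : Finset X | IsTriangle btw T ∧ x ∈ T}
        = ↑(tr.filter (fun T => x ∈ T)) := by
      ext T; simp [htr]
    rw [degB, h, Set.ncard_coe_finset]
  -- total degree sum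
  have hsum : ∑ x : X, degB btw x = 3 * t := by
    have h1 : ∀ T ∈ tr, T.card = 3 := by
      intro T hT
      simp only [htr, Finset.mem_filter] at hT
      exact hT.2.1
    calc ∑ x : X, degB btw x
        = ∑ x : X, ∑ T ∈ tr, if x ∈ T then 1 else 0 := by
          refine Finset.sum_congr rfl fun x _ => ?_
          rw [hdegF x, Finset.card_filter]
      _ = ∑ T ∈ tr, ∑ x : X, if x ∈ T then 1 else 0 := Finset.sum_comm
      _ = ∑ T ∈ tr, T.card := by
          refine Finset.sum_congr rfl fun T _ => ?_
          rw [← Finset.card_filter]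
          congr 1
          ext x; simp
      _ = 3 * t := by
          rw [Finset.sum_congr rfl h1, Finset.sum_const, smul_eq_mul, mul_comm]
  have htc : (t : ℤ) = (n : ℤ) - c := by rw [← hcoSize]; exact hcs
  have hn2t : n ≤ 2 * t := by
    have : (n : ℤ) ≤ 2 * t := by omega
    exact_mod_cast this
  -- nonlinear gives a triangle
  have hex : tr.Nonempty := by
    rw [Linear] at hnl
    push_neg at hnl
    obtain ⟨T, hT3, hTnc⟩ := hnl
    exact ⟨T, by rw [htr, Finset.mem_filter]; exact ⟨Finset.mem_univ _, hT3, hTnc⟩⟩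
  have ht1 : 1 ≤ t := Finset.card_pos.mpr hex
  by_cases ht2 : t ≤ 1
  · left
    rw [htrset]
    intro a ha b hb
    exact Finset.card_le_one.mp ht2 a ha b hb
  push_neg at ht2
  -- t ≥ 2 case
  have hdeg' : ∀ x : X, degB btw x = t ∨ degB btw x ≤ 1 := by
    intro x
    rcases hdeg x with h | h
    · left
      have : (degB btw x : ℤ) = (t : ℤ) := by rw [h, htc]
      exact_mod_cast this
    · right; exact h
  set A : Finset X := Finset.univ.filter (fun x => degB btw x = t) with hA
  set k := A.card with hk
  -- key: degree-t points are in all triangles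
  have hall : ∀ x ∈ A, ∀ T ∈ tr, x ∈ T := by
    intro x hx T hT
    simp only [hA, Finset.mem_filter] at hx
    have hsub : tr.filter (fun T => x ∈ T) ⊆ tr := Finset.filter_subset _ _
    have hcardle : tr.card ≤ (tr.filter (fun T => x ∈ T)).card := by
      rw [← hdegF x, hx.2]
    have heq := Finset.eq_of_subset_of_card_le hsub hcardle
    rw [← heq] at hT
    exact (Finset.mem_filter.mp hT).2
  -- sum split
  have hsplit : ∑ x ∈ A, degB btw x
      + ∑ x ∈ Finset.univ.filter (fun x => ¬ degB btw x = t), degB btw x = 3 * t := by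
    rw [← hsum, hA]
    exact Finset.sum_filter_add_sum_filter_not _ _ _
  have hsA : ∑ x ∈ A, degB btw x = k * t := by
    rw [Finset.sum_congr rfl (fun x hx => (Finset.mem_filter.mp hx).2),
      Finset.sum_const, smul_eq_mul]
  have hsB : ∑ x ∈ Finset.univ.filter (fun x => ¬ degB btw x = t), degB btw x
      ≤ n - k := by
    have hle : ∀ x ∈ Finset.univ.filter (fun x => ¬ degB btw x = t),
        degB btw x ≤ 1 := by
      intro x hx
      rcases hdeg' x with h | h
      · exact absurd h (Finset.mem_filter.mp hx).2
      · exact h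
    calc ∑ x ∈ Finset.univ.filter (fun x => ¬ degB btw x = t), degB btw x
        ≤ ∑ _x ∈ Finset.univ.filter (fun x => ¬ degB btw x = t), 1 :=
          Finset.sum_le_sum hle
      _ = (Finset.univ.filter (fun x => ¬ degB btw x = t)).card := by simp
      _ = n - k := by
          have := Finset.card_filter_add_card_filter_not
            (s := (Finset.univ : Finset X)) (p := fun x => degB btw x = t)
          rw [Finset.card_univ, hcard] at this
          have h2 : k = (Finset.univ.filter (fun x => degB btw x = t)).card := by
            rw [hk, hA]
          omega
  have hkn : k ≤ n := by
    rw [← hcard, ← Finset.card_univ]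
    exact Finset.card_le_card (Finset.filter_subset _ _)
  -- derive k = 2 or k = 3
  have hk4 : k ≤ 3 := by
    by_contra hc
    push_neg at hc
    have h4 : 4 * t ≤ k * t := mul_le_mul_left (by omega) t
    omega
  have hk23 : k = 2 ∨ k = 3 := by
    have h01 : k = 0 ∨ k = 1 ∨ k = 2 ∨ k = 3 := by omega
    rcases h01 with h | h | h | h
    · rw [h] at hsA hsB; omega
    · rw [h] at hsA hsB; omega
    · exact Or.inl h
    · exact Or.inr h
  -- rule out k = 3
  have hk2 : k = 2 := by
    rcases hk23 with h | h
    · exact h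
    · exfalso
      -- A has card 3 and A ⊆ T for every triangle T, each of card 3, so T = A
      have hAsubT : ∀ T ∈ tr, T = A := by
        intro T hT
        have hsub : A ⊆ T := fun x hx => hall x hx T hT
        have hT3 : T.card = 3 := by
          simp only [htr, Finset.mem_filter] at hT
          exact hT.2.1
        exact (Finset.eq_of_subset_of_card_le hsub (by omega)).symm
      obtain ⟨T₀, hT₀⟩ := hex
      have : tr ⊆ {A} := fun T hT => Finset.mem_singleton.mpr (hAsubT T hT)
      have := Finset.card_le_card this
      simp at this
      omega
  -- k = 2: extract the kernel
  obtain ⟨x, y, hxy, hAeq⟩ := Finset.card_eq_two.mp (by rw [← hk]; exact hk2)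
  right
  refine ⟨{x, y}, Set.ncard_pair hxy, ?_⟩
  intro E F hE hF hEF
  have hEtr : E ∈ tr := by simp [htr, hE]
  have hFtr : F ∈ tr := by simp [htr, hF]
  have hxE : x ∈ E := hall x (by simp [hAeq]) E hEtr
  have hyE : y ∈ E := hall y (by simp [hAeq]) E hEtr
  have hxF : x ∈ F := hall x (by simp [hAeq]) F hFtr
  have hyF : y ∈ F := hall y (by simp [hAeq]) F hFtr
  have hsub : ({x, y} : Finset X) ⊆ E ∩ F := by
    intro a ha
    simp only [Finset.mem_insert, Finset.mem_singleton] at ha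
    rcases ha with rfl | rfl <;> simp [Finset.mem_inter, *]
  have hcard2 : ({x, y} : Finset X).card = 2 := Finset.card_pair hxy
  have hEcard : E.card = 3 := hE.1
  have hInterLt : (E ∩ F).card ≤ 2 := by
    by_contra hc
    push_neg at hc
    have hsubE : E ∩ F ⊆ E := Finset.inter_subset_left
    have := Finset.eq_of_subset_of_card_le hsubE (by omega)
    have hEsubF : E ⊆ F := by rw [← this]; exact Finset.inter_subset_right
    exact hEF (Finset.eq_of_subset_of_card_le hEsubF (by rw [hEcard, hF.1]))
  have heq : ({x, y} : Finset X) = E ∩ F :=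
    Finset.eq_of_subset_of_card_le hsub (by omega)
  rw [← Finset.coe_inter, ← heq]
  simp

end FMS
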